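/- Let c = (c₁, c₂) ∈ ℂ² with c₂ ≠ 0, and let G₁ : ℂ → ℂ be an entire function with period c₂. Then the function f(z₁,z₂) = 1 - c₁²/4 - z₁²/4 + (c₁/(2c₂))·z₁z₂ - (c₁²/(2c₂))·(z₂-c₂) + (z₁-c₁)·G₁(z₂) - ((c₁/(2c₂))·(z₂-c₂) + G₁(z₂))² satisfies (∂f/∂z₁)² + f(z₁+c₁, z₂+c₂) = 1 identically on ℂ². -/

import Mathlib

theorem stmt_11 (c₁ c₂ : ℂ) (hc₂ : c₂ ≠ 0) (G₁ : ℂ → ℂ)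
    (hG : Differentiable ℂ G₁) (hper : ∀ z : ℂ, G₁ (z + c₂) = G₁ z)
    (f : ℂ → ℂ → ℂ)
    (hf : ∀ z₁ z₂ : ℂ, f z₁ z₂ =
      1 - c₁ ^ 2 / 4 - z₁ ^ 2 / 4 + (c₁ / (2 * c₂)) * z₁ * z₂
        - (c₁ ^ 2 / (2 * c₂)) * (z₂ - c₂) + (z₁ - c₁) * G₁ z₂
        - ((c₁ / (2 * c₂)) * (z₂ - c₂) + G₁ z₂) ^ 2) :
    ∀ z₁ z₂ : ℂ,
      (deriv (fun w => f w z₂) z₁) ^ 2 + f (z₁ + c₁) (z₂ + c₂) = 1 := by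
  intro z₁ z₂
  have hd : deriv (fun w => f w z₂) z₁ = -z₁ / 2 + c₁ / (2 * c₂) * z₂ + G₁ z₂ := by
    have h : HasDerivAt (fun w => f w z₂) (-z₁ / 2 + c₁ / (2 * c₂) * z₂ + G₁ z₂) z₁ := by
      have h2 : (fun w => f w z₂) = (fun w : ℂ =>
          1 - c₁ ^ 2 / 4 - w ^ 2 / 4 + (c₁ / (2 * c₂)) * w * z₂
            - (c₁ ^ 2 / (2 * c₂)) * (z₂ - c₂) + (w - c₁) * G₁ z₂
            - ((c₁ / (2 * c₂)) * (z₂ - c₂) + G₁ z₂) ^ 2) := by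
        funext w; exact hf w z₂
      rw [h2]
      have h3 := ((((((hasDerivAt_const z₁ (1 - c₁ ^ 2 / 4 : ℂ)).sub
        ((hasDerivAt_pow 2 z₁).div_const 4)).add
        (((hasDerivAt_id z₁).const_mul (c₁ / (2 * c₂))).mul_const z₂)).sub
        (hasDerivAt_const z₁ ((c₁ ^ 2 / (2 * c₂)) * (z₂ - c₂)))).add
        (((hasDerivAt_id z₁).sub_const c₁).mul_const (G₁ z₂))).sub
        (hasDerivAt_const z₁ (((c₁ / (2 * c₂)) * (z₂ - c₂) + G₁ z₂) ^ 2)))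
      simp only [id_eq] at h3
      refine HasDerivAt.congr_deriv h3 ?_
      push_cast
      ring
    exact h.deriv
  rw [hd, hf, hper]
  have h4 : (2 * c₂) ≠ 0 := by simp [hc₂]
  field_simp
  ring_nf
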